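/- Let A be a real symmetric positive definite l×l matrix, f(x) = Ax − (xᵀAx)x, and v(x) = e^{‖x‖²}/(xᵀAx) for x ≠ 0. Then the gradient of v satisfies ∇v(x) = (2v(x)/(xᵀAx))·((xᵀAx)x − Ax), and consequently f(x)ᵀ∇v(x) = −(2v(x)/(xᵀAx))·‖f(x)‖², which is strictly negative whenever f(x) ≠ 0. -/

import Mathlib

open Matrix
open scoped RealInnerProductSpace

/-- View a plain vector in `Fin l → ℝ` as a point of Euclidean space. -/
noncomputable def toE {l : ℕ} (y : Fin l → ℝ) : EuclideanSpace ℝ (Fin l) :=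
  (WithLp.equiv 2 (Fin l → ℝ)).symm y

/-- For `A` symmetric positive definite, `f x = Ax - (xᵀAx)x` and
`v x = exp(‖x‖²)/(xᵀAx)` (for `x ≠ 0`), the gradient of `v` satisfies
`∇v(x) = (2 v(x)/(xᵀAx)) ((xᵀAx)x - Ax)`, whence
`⟪f x, ∇v(x)⟫ = -(2 v(x)/(xᵀAx)) ‖f x‖²`, strictly negative whenever `f x ≠ 0`. -/
theorem stmt4 {l : ℕ} (A : Matrix (Fin l) (Fin l) ℝ) (hsymm : A.IsSymm) (hpd : A.PosDef)
    (v : EuclideanSpace ℝ (Fin l) → ℝ)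
    (hv : ∀ x : EuclideanSpace ℝ (Fin l), x ≠ 0 →
      v x = Real.exp (‖x‖ ^ 2) / ⟪x, toE (A.mulVec (WithLp.equiv 2 (Fin l → ℝ) x))⟫)
    (f : EuclideanSpace ℝ (Fin l) → EuclideanSpace ℝ (Fin l))
    (hf : ∀ x : EuclideanSpace ℝ (Fin l),
      f x = toE (A.mulVec (WithLp.equiv 2 (Fin l → ℝ) x)) -
        ⟪x, toE (A.mulVec (WithLp.equiv 2 (Fin l → ℝ) x))⟫ • x)
    (x : EuclideanSpace ℝ (Fin l)) (hx : x ≠ 0) :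
    gradient v x = (2 * v x / ⟪x, toE (A.mulVec (WithLp.equiv 2 (Fin l → ℝ) x))⟫) •
        (⟪x, toE (A.mulVec (WithLp.equiv 2 (Fin l → ℝ) x))⟫ • x -
          toE (A.mulVec (WithLp.equiv 2 (Fin l → ℝ) x))) ∧
      ⟪f x, gradient v x⟫ =
        -(2 * v x / ⟪x, toE (A.mulVec (WithLp.equiv 2 (Fin l → ℝ) x))⟫) * ‖f x‖ ^ 2 ∧
      (f x ≠ 0 → ⟪f x, gradient v x⟫ < 0) := by
  set Tc : EuclideanSpace ℝ (Fin l) →L[ℝ] EuclideanSpace ℝ (Fin l) := LinearMap.toContinuousLinearMap (Matrix.toEuclideanLin A) with hTc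
  have hT : ∀ y : EuclideanSpace ℝ (Fin l), toE (A.mulVec (WithLp.equiv 2 (Fin l → ℝ) y)) = Tc y := fun y => rfl
  set q : EuclideanSpace ℝ (Fin l) → ℝ := fun y => ⟪y, Tc y⟫ with hq
  have hqy : ∀ y : EuclideanSpace ℝ (Fin l), y ≠ 0 → 0 < q y := by
    intro y hy
    have hy' : (WithLp.equiv 2 (Fin l → ℝ)) y ≠ 0 := by
      intro h
      exact hy ((WithLp.equiv 2 (Fin l → ℝ)).injective (by simpa using h))
    have := hpd.dotProduct_mulVec_pos hy'
    rw [dotProduct_comm] at this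
    simpa [hq, EuclideanSpace.inner_eq_star_dotProduct, hTc] using this
  have hqx : 0 < q x := hqy x hx
  have hsym : ∀ a b : EuclideanSpace ℝ (Fin l), ⟪Tc a, b⟫ = ⟪a, Tc b⟫ := by
    have := (Matrix.isHermitian_iff_isSymmetric).1 hpd.1
    exact fun a b => this a b
  have hqe : ⟪x, toE (A.mulVec (WithLp.equiv 2 (Fin l → ℝ) x))⟫ = q x := rfl
  -- derivative of q
  have hq' : HasFDerivAt q
      ((fderivInnerCLM ℝ (x, Tc x)).comp ((ContinuousLinearMap.id ℝ _).prod Tc)) x := by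
    exact (hasFDerivAt_id x).inner ℝ Tc.hasFDerivAt
  -- derivative of the norm-squared
  have hn : HasFDerivAt (fun y : EuclideanSpace ℝ (Fin l) => ‖y‖ ^ 2)
      ((fderivInnerCLM ℝ (x, x)).comp
        ((ContinuousLinearMap.id ℝ _).prod (ContinuousLinearMap.id ℝ _))) x := by
    have := (hasFDerivAt_id x).inner ℝ (hasFDerivAt_id x)
    have heq : (fun y : EuclideanSpace ℝ (Fin l) => ⟪y, y⟫) = fun y => ‖y‖ ^ 2 := by
      funext y; exact real_inner_self_eq_norm_sq y
    simp only [id_eq] at this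
    rwa [heq] at this
  have he : HasFDerivAt (fun y : EuclideanSpace ℝ (Fin l) => Real.exp (‖y‖ ^ 2))
      (Real.exp (‖x‖ ^ 2) • ((fderivInnerCLM ℝ (x, x)).comp
        ((ContinuousLinearMap.id ℝ _).prod (ContinuousLinearMap.id ℝ _)))) x := hn.exp
  have hinv : HasFDerivAt (fun y => (q y)⁻¹)
      ((-(q x ^ 2)⁻¹) • ((fderivInnerCLM ℝ (x, Tc x)).comp
        ((ContinuousLinearMap.id ℝ _).prod Tc))) x :=
    (hasDerivAt_inv hqx.ne').comp_hasFDerivAt x hq'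
  have hw := he.mul hinv
  have hvw : v =ᶠ[nhds x] fun y => Real.exp (‖y‖ ^ 2) * (q y)⁻¹ := by
    filter_upwards [isOpen_compl_singleton.mem_nhds hx] with y hy
    rw [hv y hy, div_eq_mul_inv]; rfl
  have hvd := hw.congr_of_eventuallyEq hvw
  set g : EuclideanSpace ℝ (Fin l) :=
    (2 * v x / q x) • (q x • x - Tc x) with hg
  have hvx : v x = Real.exp (‖x‖ ^ 2) / q x := hv x hx
  have heqL : (InnerProductSpace.toDual ℝ (EuclideanSpace ℝ (Fin l))) g =
      Real.exp (‖x‖ ^ 2) • ((-(q x ^ 2)⁻¹) • ((fderivInnerCLM ℝ (x, Tc x)).comp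
        ((ContinuousLinearMap.id ℝ _).prod Tc))) +
      (q x)⁻¹ • (Real.exp (‖x‖ ^ 2) • ((fderivInnerCLM ℝ (x, x)).comp
        ((ContinuousLinearMap.id ℝ _).prod (ContinuousLinearMap.id ℝ _)))) := by
    ext h
    simp only [InnerProductSpace.toDual_apply_apply, ContinuousLinearMap.add_apply,
      ContinuousLinearMap.smul_apply, ContinuousLinearMap.comp_apply,
      ContinuousLinearMap.prod_apply, ContinuousLinearMap.id_apply,
      fderivInnerCLM_apply, smul_eq_mul, hg]
    rw [inner_smul_left, inner_sub_left, inner_smul_left]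
    have h1 : ⟪x, Tc h⟫ = ⟪Tc x, h⟫ := (hsym x h).symm
    have h2 : ⟪h, Tc x⟫ = ⟪Tc x, h⟫ := real_inner_comm _ _
    have h3 : ⟪h, x⟫ = ⟪x, h⟫ := real_inner_comm _ _
    rw [h1, h2, h3]
    simp only [RCLike.star_def, starRingEnd_apply, star_trivial]
    rw [hvx]
    field_simp
    ring
  have hgrad : HasGradientAt v g x := by
    rw [hasGradientAt_iff_hasFDerivAt, heqL]; exact hvd
  have hgv : gradient v x = g := hgrad.gradient
  have hqe2 : ⟪x, Tc x⟫ = q x := rfl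
  have hfx : f x = -(q x • x - Tc x) := by
    rw [hf x, hT, hqe2]; abel
  refine ⟨by rw [hgv, hqe, hg, hT], ?_, ?_⟩
  · rw [hgv, hg, hqe]
    rw [inner_smul_right]
    have : ⟪f x, q x • x - Tc x⟫ = -‖f x‖ ^ 2 := by
      have : q x • x - Tc x = -(f x) := by rw [hfx]; simp
      rw [this, inner_neg_right, real_inner_self_eq_norm_sq]
    rw [this]; ring
  · intro hfne
    rw [hgv, hg]
    rw [inner_smul_right]
    have hxx : ⟪f x, q x • x - Tc x⟫ = -‖f x‖ ^ 2 := by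
      have : q x • x - Tc x = -(f x) := by rw [hfx]; simp
      rw [this, inner_neg_right, real_inner_self_eq_norm_sq]
    rw [hxx]
    have hv0 : 0 < v x := by rw [hvx]; positivity
    have hc : 0 < 2 * v x / q x := div_pos (by linarith) hqx
    have hn2 : 0 < ‖f x‖ ^ 2 := pow_pos (norm_pos_iff.mpr hfne) 2
    have hre : 2 * v x / q x * -‖f x‖ ^ 2 = -(2 * v x / q x * ‖f x‖ ^ 2) := by ring
    rw [hre]
    exact neg_lt_zero.2 (mul_pos hc hn2)
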